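/- Let u : ℝ → ℝ be C^m near x* satisfying u(x*) = x*, u'(x*) = 1, u^{(j)}(x*) = 0 for 2 ≤ j ≤ m-1, and u^{(m)}(x*) = α ≠ 0 (m ≥ 2). Let v(x) = (u(x) - x u'(x))/(1 - u'(x)) for x ≠ x*, v(x*) = x*, and let w(x) = (v(x) - x v'(x))/(1 - v'(x)). Then w(x*) = x* and w'(x*) = 0, i.e. the standard accelerator w turns x* into a superattracting fixed point. -/

import Mathlib

open Filter Topology ContDiff

private lemma natCast_ne_infty (k : ℕ) : ((k : ℕ) : WithTop ℕ∞) ≠ ∞ := by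
  intro h
  rw [show ((k : ℕ) : WithTop ℕ∞) = (((k : ℕ) : ℕ∞) : WithTop ℕ∞) from rfl,
    WithTop.coe_inj] at h
  exact ENat.coe_ne_top k h

private lemma aux_deriv_contDiffAt {n : ℕ} {f : ℝ → ℝ} {a : ℝ}
    (hf : ContDiffAt ℝ (n + 1 : ℕ) f a) : ContDiffAt ℝ (n : ℕ) (deriv f) a := by
  have hf' : ContDiffAt ℝ ((n : WithTop ℕ∞) + 1) f a := by
    exact_mod_cast hf
  obtain ⟨s, hs, hfs⟩ := hf'.contDiffOn le_rfl (by simp)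
  obtain ⟨t, hts, hto, hat⟩ := mem_nhds_iff.1 hs
  exact ((hfs.mono hts).deriv_of_isOpen hto le_rfl).contDiffAt (hto.mem_nhds hat)


private lemma key_lim : ∀ (n : ℕ) (f : ℝ → ℝ) (a : ℝ), ContDiffAt ℝ (n : ℕ) f a →
    (∀ j, j < n → iteratedDeriv j f a = 0) →
    Filter.Tendsto (fun x => f x / (x - a) ^ n) (𝓝[≠] a)
      (𝓝 (iteratedDeriv n f a / (n.factorial : ℝ))) := by
  intro n
  induction n with
  | zero =>
      intro f a hf _
      simp only [pow_zero, div_one, Nat.factorial_zero, Nat.cast_one, iteratedDeriv_zero]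
      exact hf.continuousAt.tendsto.mono_left nhdsWithin_le_nhds
  | succ n ih =>
      intro f a hf hz
      have hf' : ContDiffAt ℝ (n : ℕ) (deriv f) a := aux_deriv_contDiffAt hf
      have hz' : ∀ j, j < n → iteratedDeriv j (deriv f) a = 0 := by
        intro j hj
        have := hz (j + 1) (by omega)
        rwa [iteratedDeriv_succ'] at this
      have hdiv0 := ih (deriv f) a hf' hz'
      have hfa0 : f a = 0 := by
        have := hz 0 (by omega); rwa [iteratedDeriv_zero] at this
      -- differentiability of f eventually
      have hev : ∀ᶠ y in 𝓝 a, DifferentiableAt ℝ f y := by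
        filter_upwards [hf.eventually (natCast_ne_infty _)] with y hy
        exact hy.differentiableAt (by simp)
      have hgd : ∀ x : ℝ, HasDerivAt (fun x => (x - a) ^ (n + 1))
          ((n + 1 : ℝ) * (x - a) ^ n) x := by
        intro x
        simpa [Pi.pow_def] using ((hasDerivAt_id x).sub_const a).pow (n + 1)
      apply deriv.lhopital_zero_nhdsNE (f := f) (g := fun x => (x - a) ^ (n + 1))
      · exact hev.filter_mono nhdsWithin_le_nhds
      · filter_upwards [self_mem_nhdsWithin] with x (hx : x ≠ a)
        rw [(hgd x).deriv]
        exact mul_ne_zero (by positivity) (pow_ne_zero _ (sub_ne_zero.2 hx))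
      · have : Filter.Tendsto f (𝓝 a) (𝓝 0) := by
          simpa [hfa0] using hf.continuousAt.tendsto
        exact this.mono_left nhdsWithin_le_nhds
      · have : Filter.Tendsto (fun x : ℝ => (x - a) ^ (n + 1)) (𝓝 a) (𝓝 0) := by
          have h0 : Filter.Tendsto (fun x : ℝ => (x - a) ^ (n + 1)) (𝓝 a)
              (𝓝 ((a - a) ^ (n + 1))) := (Continuous.tendsto (by continuity) a)
          simpa using h0
        exact this.mono_left nhdsWithin_le_nhds
      · -- deriv f x / deriv g x  →  iteratedDeriv (n+1) f a / (n+1)!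
        have h1 : Filter.Tendsto (fun x => deriv f x / (x - a) ^ n / (n + 1 : ℝ)) (𝓝[≠] a)
            (𝓝 (iteratedDeriv n (deriv f) a / (n.factorial : ℝ) / (n + 1 : ℝ))) :=
          hdiv0.div_const _
        have heq : iteratedDeriv n (deriv f) a / (n.factorial : ℝ) / (n + 1 : ℝ)
            = iteratedDeriv (n + 1) f a / ((n + 1).factorial : ℝ) := by
          rw [iteratedDeriv_succ', Nat.factorial_succ, div_div]
          congr 1
          push_cast
          ring
        rw [heq] at h1
        apply h1.congr'
        filter_upwards [self_mem_nhdsWithin] with x (hx : x ≠ a)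
        rw [(hgd x).deriv]
        rw [div_div, mul_comm]

private lemma iteratedDeriv_sub_const' {j : ℕ} (hj : j ≠ 0) (g : ℝ → ℝ) (c : ℝ) (x : ℝ) :
    iteratedDeriv j (fun z => g z - c) x = iteratedDeriv j g x := by
  obtain ⟨j, rfl⟩ := j.exists_eq_succ_of_ne_zero hj
  rw [iteratedDeriv_succ', iteratedDeriv_succ']
  congr 1
  funext y
  exact deriv_sub_const c

private lemma main_aux (k : ℕ) (xs α : ℝ) (hα : α ≠ 0) (u v w : ℝ → ℝ)
    (hu' : ContDiffAt ℝ ((k + 2 : ℕ)) u xs) (hfix : u xs = xs) (hu1 : deriv u xs = 1)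
    (hj : ∀ j, 2 ≤ j → j ≤ k + 1 → iteratedDeriv j u xs = 0)
    (hum : iteratedDeriv (k + 2) u xs = α)
    (hv : ∀ x, x ≠ xs → v x = (u x - x * deriv u x) / (1 - deriv u x))
    (hvfix : v xs = xs)
    (hw : ∀ x, w x = (v x - x * deriv v x) / (1 - deriv v x)) :
    w xs = xs ∧ deriv w xs = 0 := by
  classical
  set f₀ : ℝ → ℝ := fun x => u x - x with hf₀def
  have hf₀ : ContDiffAt ℝ ((k + 2 : ℕ)) f₀ xs := hu'.sub contDiffAt_id
  -- eventual smoothness / differentiability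
  have huev : ∀ᶠ y in 𝓝 xs, ContDiffAt ℝ ((k + 2 : ℕ)) u y := hu'.eventually (natCast_ne_infty _)
  have hud : ∀ᶠ y in 𝓝 xs, DifferentiableAt ℝ u y := by
    filter_upwards [huev] with y hy
    exact hy.differentiableAt (by simp)
  have hderiv_eq : ∀ᶠ y in 𝓝 xs, deriv f₀ y = deriv u y - 1 := by
    filter_upwards [hud] with y hy
    exact ((hy.hasDerivAt.sub (hasDerivAt_id y)).deriv)
  have hudd : ∀ᶠ y in 𝓝 xs, DifferentiableAt ℝ (deriv u) y := by
    filter_upwards [huev] with y hy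
    exact (aux_deriv_contDiffAt (n := k + 1) hy).differentiableAt
      (by simp)
  -- iterated derivatives of f₀ at xs
  have hIeq : ∀ l, 1 ≤ l → iteratedDeriv (l + 1) f₀ xs = iteratedDeriv (l + 1) u xs := by
    intro l hl
    rw [iteratedDeriv_succ' (f := f₀), iteratedDeriv_succ' (f := u)]
    have h1 : iteratedDeriv l (deriv f₀) xs =
        iteratedDeriv l (fun y => deriv u y - 1) xs :=
      Filter.EventuallyEq.iteratedDeriv_eq l hderiv_eq
    rw [h1, iteratedDeriv_sub_const' (by omega) (deriv u) 1 xs]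
  have hIj : ∀ j, j < k + 2 → iteratedDeriv j f₀ xs = 0 := by
    intro j hjlt
    match j with
    | 0 => simp [iteratedDeriv_zero, hf₀def, hfix]
    | 1 =>
        rw [iteratedDeriv_one]
        have := hderiv_eq.self_of_nhds
        rw [this, hu1]; ring
    | (l + 2) =>
        rw [show l + 2 = (l + 1) + 1 by ring, hIeq (l + 1) (by omega)]
        exact hj (l + 2) (by omega) (by omega)
  have hIm : iteratedDeriv (k + 2) f₀ xs = α := by
    rw [show k + 2 = (k + 1) + 1 by ring, hIeq (k + 1) (by omega)]
    exact hum
  -- the three limits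
  have T0 : Tendsto (fun x => f₀ x / (x - xs) ^ (k + 2)) (𝓝[≠] xs)
      (𝓝 (α / ((k + 2).factorial : ℝ))) := by
    have := key_lim (k + 2) f₀ xs hf₀ hIj
    rwa [hIm] at this
  have hf₀' : ContDiffAt ℝ ((k + 1 : ℕ)) (deriv f₀) xs := aux_deriv_contDiffAt hf₀
  have T1 : Tendsto (fun x => deriv f₀ x / (x - xs) ^ (k + 1)) (𝓝[≠] xs)
      (𝓝 (α / ((k + 1).factorial : ℝ))) := by
    have hz : ∀ j, j < k + 1 → iteratedDeriv j (deriv f₀) xs = 0 := by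
      intro j hjlt
      rw [← iteratedDeriv_succ']
      exact hIj (j + 1) (by omega)
    have := key_lim (k + 1) (deriv f₀) xs hf₀' hz
    rwa [← iteratedDeriv_succ', hIm] at this
  have hf₀'' : ContDiffAt ℝ ((k : ℕ)) (deriv (deriv f₀)) xs := aux_deriv_contDiffAt hf₀'
  have T2 : Tendsto (fun x => deriv (deriv f₀) x / (x - xs) ^ k) (𝓝[≠] xs)
      (𝓝 (α / (k.factorial : ℝ))) := by
    have hz : ∀ j, j < k → iteratedDeriv j (deriv (deriv f₀)) xs = 0 := by
      intro j hjlt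
      rw [← iteratedDeriv_succ', ← iteratedDeriv_succ']
      exact hIj (j + 1 + 1) (by omega)
    have := key_lim k (deriv (deriv f₀)) xs hf₀'' hz
    rwa [← iteratedDeriv_succ', ← iteratedDeriv_succ', hIm] at this
  -- numeric facts
  have hfk : (k.factorial : ℝ) ≠ 0 := by positivity
  have hfk1 : ((k + 1).factorial : ℝ) = (k + 1) * k.factorial := by
    rw [Nat.factorial_succ]; push_cast; ring
  have hfk2 : ((k + 2).factorial : ℝ) = (k + 2) * ((k + 1) * k.factorial) := by
    rw [Nat.factorial_succ]; push_cast [hfk1]; ring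
  have hk1 : ((k : ℝ) + 1) ≠ 0 := by positivity
  have hk2 : ((k : ℝ) + 2) ≠ 0 := by positivity
  have hL1 : α / ((k + 1).factorial : ℝ) ≠ 0 := by
    rw [hfk1]
    exact div_ne_zero hα (by positivity)
  set μ : ℝ := ((k : ℝ) + 1) / ((k : ℝ) + 2) with hμdef
  have hμne : (1 : ℝ) - μ ≠ 0 := by
    rw [hμdef, sub_ne_zero]
    intro h
    have h2 := (div_eq_one_iff_eq hk2).1 h.symm
    linarith
  -- eventually nonzero derivative
  have hE1 : ∀ᶠ x in 𝓝[≠] xs, deriv f₀ x ≠ 0 := by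
    filter_upwards [T1.eventually_ne hL1] with x hx h0
    exact hx (by rw [h0, zero_div])
  have hE2 : ∀ᶠ x in 𝓝[≠] xs, deriv f₀ x = deriv u x - 1 :=
    nhdsWithin_le_nhds hderiv_eq
  have hEx : ∀ᶠ x in 𝓝[≠] xs, x ≠ xs := self_mem_nhdsWithin
  -- slope of v tends to μ
  have Sv : Tendsto (fun x => (v x - xs) / (x - xs)) (𝓝[≠] xs) (𝓝 μ) := by
    have hq : Tendsto (fun x => 1 - (f₀ x / (x - xs) ^ (k + 2)) /
        (deriv f₀ x / (x - xs) ^ (k + 1))) (𝓝[≠] xs)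
        (𝓝 (1 - (α / ((k + 2).factorial : ℝ)) / (α / ((k + 1).factorial : ℝ)))) :=
      tendsto_const_nhds.sub (T0.div T1 hL1)
    have hval : (1 : ℝ) - (α / ((k + 2).factorial : ℝ)) / (α / ((k + 1).factorial : ℝ)) = μ := by
      rw [hfk1, hfk2, hμdef]
      field_simp
      ring
    rw [hval] at hq
    apply hq.congr'
    filter_upwards [hEx, hE1, hE2] with x hx hd hde
    have hxa : x - xs ≠ 0 := sub_ne_zero.2 hx
    have hpu : deriv u x = deriv f₀ x + 1 := by linarith [hde]
    have hF : u x = f₀ x + x := by simp [hf₀def]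
    rw [hv x hx, hpu, hF,
      show (1 : ℝ) - (deriv f₀ x + 1) = -deriv f₀ x by ring]
    field_simp [hd, hxa]
    ring
  -- derivative of v tends to μ
  have Dv : Tendsto (fun x => deriv v x) (𝓝[≠] xs) (𝓝 μ) := by
    have hq : Tendsto (fun x => (deriv (deriv f₀) x / (x - xs) ^ k) *
        (f₀ x / (x - xs) ^ (k + 2)) / (deriv f₀ x / (x - xs) ^ (k + 1)) ^ 2) (𝓝[≠] xs)
        (𝓝 ((α / (k.factorial : ℝ)) * (α / ((k + 2).factorial : ℝ)) /
          (α / ((k + 1).factorial : ℝ)) ^ 2)) :=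
      (T2.mul T0).div (T1.pow 2) (pow_ne_zero 2 hL1)
    have hval : (α / (k.factorial : ℝ)) * (α / ((k + 2).factorial : ℝ)) /
        (α / ((k + 1).factorial : ℝ)) ^ 2 = μ := by
      rw [hfk1, hfk2, hμdef]
      field_simp
    rw [hval] at hq
    apply hq.congr'
    have hE4 : ∀ᶠ x in 𝓝[≠] xs, deriv (deriv u) x = deriv (deriv f₀) x := by
      apply nhdsWithin_le_nhds
      filter_upwards [hderiv_eq.eventually_nhds] with x hx
      have h1 : deriv (deriv f₀) x = deriv (fun y => deriv u y - 1) x :=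
        Filter.EventuallyEq.deriv_eq hx
      rw [h1, deriv_sub_const]
    filter_upwards [hEx, hE1, hE2, hE4, nhdsWithin_le_nhds hud,
      nhdsWithin_le_nhds hudd] with x hx hd hde hdd hudx huddx
    have hxa : x - xs ≠ 0 := sub_ne_zero.2 hx
    -- v agrees with the formula near x
    have hveq : v =ᶠ[𝓝 x] fun y => (u y - y * deriv u y) / (1 - deriv u y) := by
      filter_upwards [isOpen_ne.mem_nhds hx] with y hy
      exact hv y hy
    set p := deriv u x with hp
    set q := deriv (deriv u) x with hq2
    have hden : 1 - p ≠ 0 := by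
      rw [hp]
      intro h
      apply hd
      rw [hde]
      linarith
    have hnum : HasDerivAt (fun y => u y - y * deriv u y)
        (p - (1 * p + x * q)) x :=
      (hudx.hasDerivAt).sub ((hasDerivAt_id x).mul huddx.hasDerivAt)
    have hdend : HasDerivAt (fun y => 1 - deriv u y) (0 - q) x :=
      (hasDerivAt_const x 1).sub huddx.hasDerivAt
    have hΦ : HasDerivAt (fun y => (u y - y * deriv u y) / (1 - deriv u y))
        (((p - (1 * p + x * q)) * (1 - p) - (u x - x * p) * (0 - q)) / (1 - p) ^ 2) x :=
      hnum.div hdend hden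
    have hdv : deriv v x = ((p - (1 * p + x * q)) * (1 - p) - (u x - x * p) * (0 - q))
        / (1 - p) ^ 2 := by
      rw [hveq.deriv_eq]
      exact hΦ.deriv
    rw [hdv]
    have hF : u x = f₀ x + x := by simp [hf₀def]
    have hq3 : q = deriv (deriv f₀) x := hdd
    have hp2 : p = deriv f₀ x + 1 := by rw [hp]; linarith [hde]
    rw [hF, hq3, hp2,
      show (1 : ℝ) - (deriv f₀ x + 1) = -deriv f₀ x by ring]
    field_simp [hd, hxa]
    ring
  -- v has derivative μ at xs
  have hvd : HasDerivAt v μ xs := by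
    rw [hasDerivAt_iff_tendsto_slope]
    apply Sv.congr
    intro x
    rw [slope_def_field, hvfix]
  have hdvxs : deriv v xs = μ := hvd.deriv
  -- conclusion part 1
  have hwfix : w xs = xs := by
    rw [hw xs, hvfix, hdvxs]
    rw [show xs - xs * μ = xs * (1 - μ) by ring, mul_div_assoc, div_self hμne, mul_one]
  refine ⟨hwfix, ?_⟩
  -- conclusion part 2
  have hwd : HasDerivAt w 0 xs := by
    rw [hasDerivAt_iff_tendsto_slope]
    have hq : Tendsto (fun x => ((v x - xs) / (x - xs) - deriv v x) / (1 - deriv v x))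
        (𝓝[≠] xs) (𝓝 ((μ - μ) / (1 - μ))) :=
      (Sv.sub Dv).div (tendsto_const_nhds.sub Dv) hμne
    rw [show (μ - μ) / (1 - μ) = 0 by rw [sub_self, zero_div]] at hq
    apply hq.congr'
    filter_upwards [hEx, (tendsto_const_nhds.sub Dv).eventually_ne hμne] with x hx hdvne
    have hxa : x - xs ≠ 0 := sub_ne_zero.2 hx
    rw [slope_def_field, hwfix, hw x]
    field_simp
    ring
  exact hwd.deriv

/-- the standard accelerator `w = C(x, v)`, with `v = C(x, u)` the
extended Newton map of `u` satisfying (H), has a superattracting fixed point at `x*`. -/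
theorem stmt_7 (m : ℕ) (hm : 2 ≤ m) (xs α : ℝ) (hα : α ≠ 0) (u v w : ℝ → ℝ)
    (hu : ContDiffAt ℝ (m : ℕ∞) u xs) (hfix : u xs = xs) (hu1 : deriv u xs = 1)
    (hj : ∀ j, 2 ≤ j → j ≤ m - 1 → iteratedDeriv j u xs = 0)
    (hum : iteratedDeriv m u xs = α)
    (hv : ∀ x, x ≠ xs → v x = (u x - x * deriv u x) / (1 - deriv u x))
    (hvfix : v xs = xs)
    (hw : ∀ x, w x = (v x - x * deriv v x) / (1 - deriv v x)) :
    w xs = xs ∧ deriv w xs = 0 := by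
  obtain ⟨k, rfl⟩ : ∃ k, m = k + 2 := ⟨m - 2, by omega⟩
  have hu' : ContDiffAt ℝ ((k + 2 : ℕ)) u xs := by exact_mod_cast hu
  exact main_aux k xs α hα u v w hu' hfix hu1
    (fun j h2 h1 => hj j h2 (by omega)) hum hv hvfix hw
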